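/- Let N ≥ 2, e_N = (0,...,0,1) ∈ ℝ^N, and for φ ∈ (0,π) let Λ^φ = {x ∈ ℝ^N \ {0} : (x/|x|)·e_N > cos φ}. If φ ∈ [π/2, π), then for every R > 0 the open R-neighborhood N[Λ^φ, R] = {x ∈ ℝ^N : dist(x, Λ^φ) < R} equals the translated cone Λ^φ − (R/ sin φ) e_N. -/

import Mathlib

open scoped RealInnerProductSpace
open Set Metric

noncomputable section

/-- Ambient Euclidean space `ℝ^N` with `N = n + 1`, written as `ℝ^{N-1} × ℝ`
(with the `L²` norm), so that the last coordinate is directly accessible. -/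
abbrev Amb (n : ℕ) := WithLp 2 (EuclideanSpace ℝ (Fin n) × ℝ)

/-- The last coordinate `x_N` of a point. -/
def lastCoord (n : ℕ) (x : Amb n) : ℝ := (WithLp.equiv 2 (EuclideanSpace ℝ (Fin n) × ℝ) x).snd

/-- The unit vector `e_N = (0, …, 0, 1)`. -/
def eVec (n : ℕ) : Amb n := (WithLp.equiv 2 (EuclideanSpace ℝ (Fin n) × ℝ)).symm (0, 1)

/-- The open cone `Λ^φ = {x ∈ ℝ^N \ {0} : (x/|x|)·e_N > cos φ}` with vertex `0`,
axis `e_N` and half-opening angle `φ`. -/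
def cone (n : ℕ) (φ : ℝ) : Set (Amb n) :=
  {x | x ≠ 0 ∧ ‖x‖ * Real.cos φ < lastCoord n x}

lemma amb_norm_sq (n : ℕ) (x : Amb n) : ‖x‖^2 = ‖x.fst‖^2 + x.snd^2 := by
  rw [WithLp.prod_norm_sq_eq_of_L2]
  simp [Real.norm_eq_abs, sq_abs]

lemma mem_cone_iff (n : ℕ) (φ : ℝ) (hφ : φ ∈ Set.Ico (Real.pi / 2) Real.pi) (x : Amb n) :
    x ∈ cone n φ ↔ Real.cos φ * ‖x.fst‖ < Real.sin φ * x.snd := by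
  have hc : Real.cos φ ≤ 0 :=
    Real.cos_nonpos_of_pi_div_two_le_of_le hφ.1 (by linarith [hφ.2, Real.pi_pos])
  have hs : 0 < Real.sin φ :=
    Real.sin_pos_of_pos_of_lt_pi (by linarith [hφ.1, Real.pi_pos]) hφ.2
  have hcs : Real.sin φ ^ 2 + Real.cos φ ^ 2 = 1 := Real.sin_sq_add_cos_sq φ
  have hns := amb_norm_sq n x
  have hn0 : (0:ℝ) ≤ ‖x‖ := norm_nonneg x
  have hf0 : (0:ℝ) ≤ ‖x.fst‖ := norm_nonneg _
  constructor
  · rintro ⟨hne, hlt⟩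
    have hx2 : lastCoord n x = x.snd := rfl
    rw [hx2] at hlt
    rcases le_or_gt x.snd 0 with h2 | h2
    · -- x.snd ≤ 0 : square the inequality
      have hA : x.snd^2 < Real.cos φ^2 * ‖x‖^2 := by
        nlinarith [mul_pos (show (0:ℝ) < x.snd - ‖x‖ * Real.cos φ by linarith)
          (show (0:ℝ) < -x.snd - ‖x‖ * Real.cos φ by linarith)]
      have hB : Real.sin φ^2 * x.snd^2 < Real.cos φ^2 * ‖x.fst‖^2 := by nlinarith
      by_contra hcon
      push_neg at hcon
      have hu0 : Real.cos φ * ‖x.fst‖ ≤ 0 := mul_nonpos_of_nonpos_of_nonneg hc hf0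
      have hv0 : Real.sin φ * x.snd ≤ 0 := mul_nonpos_of_nonneg_of_nonpos hs.le h2
      have hprod : (Real.cos φ * ‖x.fst‖ - Real.sin φ * x.snd) *
          (-(Real.cos φ * ‖x.fst‖) - Real.sin φ * x.snd) ≥ 0 :=
        mul_nonneg (by linarith) (by linarith)
      nlinarith [hprod, hB]
    · nlinarith [mul_nonpos_of_nonpos_of_nonneg hc hf0]
  · intro h
    have hne : x ≠ 0 := by
      intro h0
      rw [h0] at h
      have : ((0 : Amb n)).fst = 0 := rfl
      have h2 : ((0 : Amb n)).snd = 0 := rfl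
      rw [this, h2] at h
      simp at h
    refine ⟨hne, ?_⟩
    show ‖x‖ * Real.cos φ < x.snd
    rcases le_or_gt x.snd 0 with h2 | h2
    · have hv0 : Real.sin φ * x.snd ≤ 0 := mul_nonpos_of_nonneg_of_nonpos hs.le h2
      have hA : Real.cos φ^2 * ‖x.fst‖^2 > Real.sin φ^2 * x.snd^2 := by
        nlinarith [mul_pos (show (0:ℝ) < Real.sin φ * x.snd - Real.cos φ * ‖x.fst‖ by linarith)
          (show (0:ℝ) < -(Real.sin φ * x.snd) - Real.cos φ * ‖x.fst‖ by linarith)]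
      have hB : Real.cos φ^2 * ‖x‖^2 > x.snd^2 := by nlinarith
      by_contra hcon
      push_neg at hcon
      have hu0 : ‖x‖ * Real.cos φ ≤ 0 := mul_nonpos_of_nonneg_of_nonpos hn0 hc
      have hprod : (‖x‖ * Real.cos φ - x.snd) * (-(‖x‖ * Real.cos φ) - x.snd) ≥ 0 :=
        mul_nonneg (by linarith) (by linarith)
      nlinarith [hprod, hB]
    · nlinarith [mul_nonpos_of_nonpos_of_nonneg hc hn0]

lemma lip_aux (n : ℕ) (c s : ℝ) (hc : c ≤ 0) (hs : 0 < s) (hcs : s^2 + c^2 = 1)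
    (x y : Amb n) : c * ‖x.fst‖ - s * x.snd ≤ (c * ‖y.fst‖ - s * y.snd) + ‖x - y‖ := by
  set a := ‖x.fst - y.fst‖ with ha
  set b := x.snd - y.snd with hb
  have hd2 : ‖x - y‖^2 = a^2 + b^2 := by
    have h1 : (x - y).fst = x.fst - y.fst := rfl
    have h2 : (x - y).snd = x.snd - y.snd := rfl
    rw [amb_norm_sq, h1, h2]
  have habs : |‖x.fst‖ - ‖y.fst‖| ≤ a := abs_norm_sub_norm_le x.fst y.fst
  have h1 : c * (‖x.fst‖ - ‖y.fst‖) ≤ -c * a := by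
    rcases abs_le.mp habs with ⟨hl, hr⟩
    nlinarith
  have h2 : -s * b ≤ s * |b| := by
    have := neg_abs_le b
    nlinarith [abs_nonneg b]
  have key : -c * a + s * |b| ≤ ‖x - y‖ := by
    nlinarith [sq_nonneg (s * a + c * |b|), abs_nonneg b, sq_abs b,
      norm_nonneg (x - y), norm_nonneg (x.fst - y.fst),
      mul_nonneg (mul_nonneg (neg_nonneg.mpr hc) (norm_nonneg (x.fst - y.fst))) hs.le]
  nlinarith [abs_nonneg b]

/-- For `N ≥ 2` and `φ ∈ [π/2, π)`, for every `R > 0` the open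
`R`-neighborhood `N[Λ^φ, R] = {x : dist(x, Λ^φ) < R}` equals the translated cone
`Λ^φ - (R / sin φ) e_N = {x : x + (R / sin φ) e_N ∈ Λ^φ}`. -/
theorem neighborhood_of_cone_eq_translate (n : ℕ) (hn : 1 ≤ n) (φ : ℝ)
    (hφ : φ ∈ Set.Ico (Real.pi / 2) Real.pi) (R : ℝ) (hR : 0 < R) :
    {x : Amb n | Metric.infDist x (cone n φ) < R} =
      {x : Amb n | x + (R / Real.sin φ) • eVec n ∈ cone n φ} := by
  classical
  have hc : Real.cos φ ≤ 0 :=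
    Real.cos_nonpos_of_pi_div_two_le_of_le hφ.1 (by linarith [hφ.2, Real.pi_pos])
  have hs : 0 < Real.sin φ :=
    Real.sin_pos_of_pos_of_lt_pi (by linarith [hφ.1, Real.pi_pos]) hφ.2
  have hcs : Real.sin φ ^ 2 + Real.cos φ ^ 2 = 1 := Real.sin_sq_add_cos_sq φ
  set c := Real.cos φ
  set s := Real.sin φ
  have hfst : ∀ x : Amb n, (x + (R / s) • eVec n).fst = x.fst := by
    intro x
    show x.fst + (R / s) • (0 : EuclideanSpace ℝ (Fin n)) = x.fst
    simp
  have hsnd : ∀ x : Amb n, (x + (R / s) • eVec n).snd = x.snd + R / s := by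
    intro x
    show x.snd + (R / s) • (1 : ℝ) = x.snd + R / s
    simp
  have hcone_ne : (cone n φ).Nonempty := by
    refine ⟨eVec n, (mem_cone_iff n φ hφ _).mpr ?_⟩
    have h1 : (eVec n).fst = 0 := rfl
    have h2 : (eVec n).snd = 1 := rfl
    rw [h1, h2]
    simpa using hs
  ext x
  simp only [mem_setOf_eq]
  rw [mem_cone_iff n φ hφ, hfst, hsnd]
  have hrhs : (s * (x.snd + R / s)) = s * x.snd + R := by field_simp
  rw [hrhs]
  constructor
  · intro h
    obtain ⟨y, hy, hxy⟩ := (Metric.infDist_lt_iff hcone_ne).mp h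
    have hy' := (mem_cone_iff n φ hφ y).mp hy
    have hl := lip_aux n c s hc hs hcs x y
    rw [dist_eq_norm] at hxy
    linarith
  · intro h
    -- h : c * ‖x.fst‖ < s * x.snd + R
    rcases lt_or_ge (c * ‖x.fst‖) (s * x.snd) with hin | hout
    · have hx : x ∈ cone n φ := (mem_cone_iff n φ hφ x).mpr hin
      calc Metric.infDist x (cone n φ) ≤ dist x x := Metric.infDist_le_dist_of_mem hx
        _ = 0 := dist_self x
        _ < R := hR
    · set g := c * ‖x.fst‖ - s * x.snd with hg
      have hg0 : 0 ≤ g := by simp [hg]; linarith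
      have hgR : g < R := by simp [hg]; linarith
      set t := (g + R) / 2 with ht
      have htg : g < t := by simp [ht]; linarith
      have htR : t < R := by simp [ht]; linarith
      have ht0 : 0 < t := by linarith
      set u : EuclideanSpace ℝ (Fin n) :=
        if x.fst = 0 then EuclideanSpace.single (⟨0, hn⟩ : Fin n) (1:ℝ) else ‖x.fst‖⁻¹ • x.fst
        with hu
      have hu1 : ‖u‖ = 1 := by
        rw [hu]
        split_ifs with h0
        · simp [EuclideanSpace.norm_single]
        · rw [norm_smul, norm_inv, norm_norm, inv_mul_cancel₀ (norm_ne_zero_iff.mpr h0)]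
      have hxu : x.fst = ‖x.fst‖ • u := by
        rw [hu]
        split_ifs with h0
        · simp [h0]
        · rw [smul_smul, mul_inv_cancel₀ (norm_ne_zero_iff.mpr h0), one_smul]
      set y : Amb n := (WithLp.equiv 2 (EuclideanSpace ℝ (Fin n) × ℝ)).symm
        (x.fst - (t * c) • u, x.snd + t * s) with hy
      have hy1 : y.fst = x.fst - (t * c) • u := rfl
      have hy2 : y.snd = x.snd + t * s := rfl
      have htc : t * c ≤ 0 := mul_nonpos_of_nonneg_of_nonpos ht0.le hc
      have hyn : ‖y.fst‖ = ‖x.fst‖ - t * c := by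
        rw [hy1]
        nth_rewrite 1 [hxu]
        rw [← sub_smul, norm_smul, hu1, mul_one, Real.norm_eq_abs,
          abs_of_nonneg (by linarith [norm_nonneg x.fst])]
      have hymem : y ∈ cone n φ := by
        rw [mem_cone_iff n φ hφ, hyn, hy2]
        nlinarith
      have hdist : dist x y = t := by
        have h1 : (x - y).fst = (t * c) • u := by
          show x.fst - (x.fst - (t * c) • u) = (t * c) • u
          abel
        have h2 : (x - y).snd = -(t * s) := by
          show x.snd - (x.snd + t * s) = -(t * s)
          ring
        have hsq : ‖x - y‖^2 = t^2 := by
          rw [amb_norm_sq, h1, h2, norm_smul, hu1, mul_one, Real.norm_eq_abs, sq_abs]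
          linear_combination t^2 * hcs
        rw [dist_eq_norm]
        have := Real.sqrt_sq (norm_nonneg (x - y))
        rw [← this, hsq, Real.sqrt_sq ht0.le]
      calc Metric.infDist x (cone n φ) ≤ dist x y := Metric.infDist_le_dist_of_mem hymem
        _ = t := hdist
        _ < R := htR
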